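/- Let E be a finite set, h ≥ 1 an integer, and α : E → ℤ^h a family of vectors such that the ℤ-span of { α(e) : e ∈ E } is all of ℤ^h, and such that for every subset S ⊆ E the quotient ℤ^h / span_ℤ{ α(e) : e ∈ S } is torsion-free. For y ∈ (0,1)^E, let B(ln y) be the real h×h matrix with entries B(ln y)_{ij} = Σ_{e∈E} α(e)_i · α(e)_j · ln(y_e). Then for all indices i, j, the (i,j) entry of the inverse matrix B(ln y)^{-1} tends to 0 as y → 0, i.e., for every sequence y^{(k)} ∈ (0,1)^E with y^{(k)}_e → 0 for every e ∈ E, one has (B(ln y^{(k)})^{-1})_{ij} → 0. -/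

import Mathlib

open Filter Matrix

private lemma stmt15_span {E : Type*} {h : ℕ} (a : E → Fin h → ℤ)
    (hspan : Submodule.span ℤ (Set.range a) = ⊤)
    (x : Fin h → ℝ) (hx : ∀ e, ∑ i, (a e i : ℝ) * x i = 0) : x = 0 := by
  let L : (Fin h → ℤ) →ₗ[ℤ] ℝ :=
  { toFun := fun v => ∑ i, (v i : ℝ) * x i
    map_add' := by intro u v; simp [add_mul, Finset.sum_add_distrib]
    map_smul' := by intro c v; simp [Finset.mul_sum, mul_assoc] }
  have hL : ∀ v : Fin h → ℤ, L v = 0 := by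
    intro v
    have hv : v ∈ Submodule.span ℤ (Set.range a) := by rw [hspan]; trivial
    induction hv using Submodule.span_induction with
    | mem v hv => obtain ⟨e, rfl⟩ := hv; exact hx e
    | zero => simp
    | add u v _ _ hu hv => simp [map_add, hu, hv]
    | smul c v _ hv => show L (c • v) = 0; rw [_root_.map_smul, hv, smul_zero]
  funext i0
  have := hL (Pi.single i0 1)
  simpa [L, Pi.single_apply, Finset.sum_ite_eq] using this

private lemma stmt15_lb {E : Type*} [Fintype E] {h : ℕ} (hh : 1 ≤ h) (a : E → Fin h → ℤ)
    (hx0 : ∀ x : Fin h → ℝ, (∀ e, ∑ i, (a e i : ℝ) * x i = 0) → x = 0) :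
    ∃ lam > 0, ∀ x : Fin h → ℝ,
      lam * (∑ i, (x i)^2) ≤ ∑ e, (∑ i, (a e i : ℝ) * x i)^2 := by
  classical
  set Q : (Fin h → ℝ) → ℝ := fun x => ∑ e, (∑ i, (a e i : ℝ) * x i)^2 with hQ
  set g : (Fin h → ℝ) → ℝ := fun x => ∑ i, (x i)^2 with hg
  have hgc : Continuous g := by fun_prop
  have hQc : Continuous Q := by fun_prop
  set S : Set (Fin h → ℝ) := {x | g x = 1} with hS
  have hclosed : IsClosed S := isClosed_eq hgc continuous_const
  have hbdd : Bornology.IsBounded S := by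
    refine (Metric.isBounded_closedBall (x := (0 : Fin h → ℝ)) (r := 1)).subset ?_
    intro x hx
    have hx1 : ∑ i, (x i)^2 = 1 := hx
    simp only [Metric.mem_closedBall, dist_zero_right]
    rw [pi_norm_le_iff_of_nonneg zero_le_one]
    intro i
    have h1 : (x i)^2 ≤ 1 := by
      have := Finset.single_le_sum (f := fun i => (x i)^2) (fun i _ => sq_nonneg _)
        (Finset.mem_univ i)
      rw [hx1] at this; exact this
    rw [Real.norm_eq_abs]
    nlinarith [abs_nonneg (x i), sq_abs (x i)]
  have hcompact : IsCompact S := Metric.isCompact_of_isClosed_isBounded hclosed hbdd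
  have hne : S.Nonempty := by
    refine ⟨Pi.single ⟨0, hh⟩ 1, ?_⟩
    simp [hS, hg, Pi.single_apply]
  obtain ⟨x0, hx0S, hmin⟩ := hcompact.exists_isMinOn hne hQc.continuousOn
  have hQnn : ∀ x, 0 ≤ Q x := fun x => Finset.sum_nonneg fun e _ => sq_nonneg _
  have hx01 : ∑ i, (x0 i)^2 = 1 := hx0S
  have hlam : 0 < Q x0 := by
    rcases lt_or_eq_of_le (hQnn x0) with hp | hp
    · exact hp
    · exfalso
      have hz : ∀ e, ∑ i, (a e i : ℝ) * x0 i = 0 := by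
        intro e
        have hsum : ∑ e, (∑ i, (a e i : ℝ) * x0 i)^2 = 0 := hp.symm
        have := (Finset.sum_eq_zero_iff_of_nonneg (fun e _ => sq_nonneg
          (∑ i, (a e i : ℝ) * x0 i))).1 hsum e (Finset.mem_univ e)
        exact pow_eq_zero_iff (by norm_num) |>.1 this
      have : x0 = 0 := hx0 x0 hz
      rw [this] at hx01
      simp at hx01
  refine ⟨Q x0, hlam, fun x => ?_⟩
  by_cases hx : x = 0
  · simp [hx, hQnn, hQ, hg]
  · have hgx : 0 < g x := by
      rcases Function.ne_iff.1 hx with ⟨i, hi⟩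
      have : 0 < (x i)^2 := lt_of_le_of_ne (sq_nonneg _) (Ne.symm (pow_ne_zero _ hi))
      calc (0:ℝ) < (x i)^2 := this
        _ ≤ g x := Finset.single_le_sum (f := fun i => (x i)^2)
          (fun i _ => sq_nonneg _) (Finset.mem_univ i)
    set r : ℝ := Real.sqrt (g x) with hr
    have hrpos : 0 < r := Real.sqrt_pos.2 hgx
    have hr2 : r^2 = g x := Real.sq_sqrt hgx.le
    set u : Fin h → ℝ := r⁻¹ • x with hu
    have hgu : g u = 1 := by
      simp only [hg, hu, Pi.smul_apply, smul_eq_mul, mul_pow]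
      rw [← Finset.mul_sum]
      field_simp
      rw [hr2]
    have hQu : Q u = (r^2)⁻¹ * Q x := by
      simp only [hQ, hu, Pi.smul_apply, smul_eq_mul, Finset.mul_sum]
      refine Finset.sum_congr rfl fun e _ => ?_
      have heq : ∑ i', (a e i' : ℝ) * (r⁻¹ * x i') = r⁻¹ * ∑ i', (a e i' : ℝ) * x i' := by
        rw [Finset.mul_sum]; exact Finset.sum_congr rfl fun i' _ => by ring
      rw [heq, mul_pow, inv_pow]
    have hmin' : Q x0 ≤ Q u := hmin hgu
    rw [hQu] at hmin'
    have : Q x0 * r^2 ≤ Q x := by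
      calc Q x0 * r^2 ≤ ((r^2)⁻¹ * Q x) * r^2 := by nlinarith [sq_nonneg r]
        _ = Q x := by field_simp
    show Q x0 * g x ≤ Q x
    rw [← hr2]; exact this

private lemma stmt15_quad {E : Type*} [Fintype E] {h : ℕ} (a : E → Fin h → ℤ)
    (c : E → ℝ) (x : Fin h → ℝ) :
    x ⬝ᵥ (Matrix.of fun i' j' : Fin h => ∑ e : E, ((a e i' : ℝ) * a e j') * c e).mulVec x
      = ∑ e : E, c e * (∑ i', (a e i' : ℝ) * x i')^2 := by
  have lhs : x ⬝ᵥ (Matrix.of fun i' j' : Fin h => ∑ e : E, ((a e i' : ℝ) * a e j') * c e).mulVec x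
      = ∑ i', ∑ j', ∑ e, x i' * (((a e i' : ℝ) * a e j') * c e) * x j' := by
    simp only [dotProduct, Matrix.mulVec, Matrix.of_apply, Finset.sum_mul,
      Finset.mul_sum]
    refine Finset.sum_congr rfl fun i' _ => Finset.sum_congr rfl fun j' _ =>
      Finset.sum_congr rfl fun e _ => by ring
  rw [lhs]
  calc ∑ i', ∑ j', ∑ e, x i' * (((a e i' : ℝ) * a e j') * c e) * x j'
      = ∑ i', ∑ e, ∑ j', x i' * (((a e i' : ℝ) * a e j') * c e) * x j' :=
        Finset.sum_congr rfl fun i' _ => Finset.sum_comm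
    _ = ∑ e, ∑ i', ∑ j', x i' * (((a e i' : ℝ) * a e j') * c e) * x j' :=
        Finset.sum_comm
    _ = ∑ e : E, c e * (∑ i', (a e i' : ℝ) * x i')^2 := by
        refine Finset.sum_congr rfl fun e _ => ?_
        rw [sq, Finset.sum_mul_sum, Finset.mul_sum]
        refine Finset.sum_congr rfl fun i' _ => ?_
        rw [Finset.mul_sum]
        refine Finset.sum_congr rfl fun j' _ => by ring

/-- Proposition 2.1(ii): for a unimodular collection of vectors `a : E → ℤ^h` (spanning, with all
quotients `ℤ^h / span{a(e) : e ∈ S}` torsion-free), every entry of the inverse of the real matrix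
`B(ln y) = (Σ_e a(e)_i·a(e)_j·ln(y_e))` tends to `0` as `y → 0` within `(0,1)^E`. -/
theorem stmt_15 {E : Type*} [Fintype E] (h : ℕ) (hh : 1 ≤ h) (a : E → Fin h → ℤ)
    (hspan : Submodule.span ℤ (Set.range a) = ⊤)
    (htf : ∀ S : Set E, NoZeroSMulDivisors ℤ ((Fin h → ℤ) ⧸ Submodule.span ℤ (a '' S)))
    (i j : Fin h)
    (y : ℕ → E → ℝ) (hy0 : ∀ k e, 0 < y k e) (hy1 : ∀ k e, y k e < 1)
    (hlim : ∀ e : E, Filter.Tendsto (fun k => y k e) Filter.atTop (nhds 0)) :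
    Filter.Tendsto
      (fun k =>
        (Matrix.of fun i' j' : Fin h =>
            ∑ e : E, ((a e i' : ℝ) * (a e j' : ℝ)) * Real.log (y k e))⁻¹ i j)
      Filter.atTop (nhds 0) := by
  classical
  -- E is nonempty
  have hEne : Nonempty E := by
    by_contra hE
    rw [not_nonempty_iff] at hE
    have h1 : Set.range a = ∅ := Set.range_eq_empty a
    rw [h1, Submodule.span_empty] at hspan
    have h2 : (Pi.single (⟨0, hh⟩ : Fin h) 1 : Fin h → ℤ) ∈ (⊥ : Submodule ℤ (Fin h → ℤ)) := by
      rw [hspan]; trivial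
    rw [Submodule.mem_bot] at h2
    have := congrFun h2 ⟨0, hh⟩
    simp at this
  obtain ⟨lam, hlampos, hlb⟩ := stmt15_lb hh a (stmt15_span a hspan)
  -- the positive coefficients
  set c : ℕ → E → ℝ := fun k e => -Real.log (y k e) with hc
  have hcpos : ∀ k e, 0 < c k e := fun k e =>
    neg_pos.2 (Real.log_neg (hy0 k e) (hy1 k e))
  -- the minimum coefficient
  set t : ℕ → ℝ := fun k => Finset.univ.inf' Finset.univ_nonempty (fun e => c k e) with ht
  have htpos : ∀ k, 0 < t k := by
    intro k
    rw [ht]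
    simp only [Finset.lt_inf'_iff]
    exact fun e _ => hcpos k e
  have htlow : ∀ k e, t k ≤ c k e := fun k e =>
    Finset.inf'_le _ (Finset.mem_univ e)
  have httop : Tendsto t atTop atTop := by
    rw [tendsto_atTop]
    intro M
    have hce : ∀ e, Tendsto (fun k => c k e) atTop atTop := by
      intro e
      have h1 : Tendsto (fun k => y k e) atTop (nhdsWithin 0 (Set.Ioi 0)) :=
        tendsto_nhdsWithin_of_tendsto_nhds_of_eventually_within _ (hlim e)
          (Eventually.of_forall fun k => hy0 k e)
      have h2 : Tendsto (fun k => Real.log (y k e)) atTop atBot :=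
        Real.tendsto_log_nhdsGT_zero.comp h1
      exact tendsto_neg_atTop_iff.2 h2
    have hev : ∀ᶠ k in atTop, ∀ e, M ≤ c k e :=
      eventually_all.2 fun e => (hce e).eventually_ge_atTop M
    filter_upwards [hev] with k hk
    exact Finset.le_inf' _ _ fun e _ => hk e
  -- the positive matrix N k
  set N : ℕ → Matrix (Fin h) (Fin h) ℝ :=
    fun k => Matrix.of fun i' j' : Fin h => ∑ e : E, ((a e i' : ℝ) * a e j') * c k e with hN
  -- quadratic form lower bound
  have hql : ∀ k (x : Fin h → ℝ),
      (lam * t k) * (∑ i', (x i')^2) ≤ x ⬝ᵥ (N k).mulVec x := by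
    intro k x
    rw [stmt15_quad a (c k) x]
    have step1 : t k * ∑ e, (∑ i', (a e i' : ℝ) * x i')^2
        ≤ ∑ e, c k e * (∑ i', (a e i' : ℝ) * x i')^2 := by
      rw [Finset.mul_sum]
      exact Finset.sum_le_sum fun e _ =>
        mul_le_mul_of_nonneg_right (htlow k e) (sq_nonneg _)
    calc (lam * t k) * (∑ i', (x i')^2) = t k * (lam * ∑ i', (x i')^2) := by ring
      _ ≤ t k * ∑ e, (∑ i', (a e i' : ℝ) * x i')^2 :=
          mul_le_mul_of_nonneg_left (hlb x) (htpos k).le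
      _ ≤ _ := step1
  -- N k is positive definite
  have hpd : ∀ k, (N k).PosDef := by
    intro k
    rw [Matrix.posDef_iff_dotProduct_mulVec]
    constructor
    · ext i' j'
      simp only [hN, Matrix.conjTranspose_apply, Matrix.of_apply, star_trivial]
      exact Finset.sum_congr rfl fun e _ => by ring
    · intro x hx
      have hx2 : 0 < ∑ i', (x i')^2 := by
        rcases Function.ne_iff.1 hx with ⟨i', hi'⟩
        have : 0 < (x i')^2 := lt_of_le_of_ne (sq_nonneg _) (Ne.symm (pow_ne_zero _ hi'))
        calc (0:ℝ) < (x i')^2 := this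
          _ ≤ ∑ i', (x i')^2 := Finset.single_le_sum (f := fun i' => (x i')^2)
            (fun i' _ => sq_nonneg _) (Finset.mem_univ i')
      have := hql k x
      have hpos : 0 < (lam * t k) * (∑ i', (x i')^2) :=
        mul_pos (mul_pos hlampos (htpos k)) hx2
      simpa [star_trivial] using lt_of_lt_of_le hpos this
  have hinv : ∀ k, N k * (N k)⁻¹ = 1 := fun k =>
    Matrix.mul_nonsing_inv _ (isUnit_iff_ne_zero.2 (hpd k).det_pos.ne')
  -- the entry bound
  have hbound : ∀ k, |(N k)⁻¹ i j| ≤ (lam * t k)⁻¹ := by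
    intro k
    set w : Fin h → ℝ := (N k)⁻¹.mulVec (Pi.single j 1) with hw
    have hwi : ∀ i', w i' = (N k)⁻¹ i' j := by
      intro i'
      rw [hw, Matrix.mulVec_single]
      simp
    have hNw : (N k).mulVec w = Pi.single j 1 := by
      rw [hw, Matrix.mulVec_mulVec, hinv k, Matrix.one_mulVec]
    have hq : w ⬝ᵥ (N k).mulVec w = w j := by
      rw [hNw, dotProduct_single, mul_one]
    set s : ℝ := ∑ i', (w i')^2 with hs
    have hsnn : 0 ≤ s := Finset.sum_nonneg fun i' _ => sq_nonneg _
    have h1 : (lam * t k) * s ≤ w j := by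
      have := hql k w
      rw [hq] at this
      exact this
    have h2 : (w j)^2 ≤ s := Finset.single_le_sum (f := fun i' => (w i')^2)
      (fun i' _ => sq_nonneg _) (Finset.mem_univ j)
    have h3 : (w i)^2 ≤ s := Finset.single_le_sum (f := fun i' => (w i')^2)
      (fun i' _ => sq_nonneg _) (Finset.mem_univ i)
    have hltk : 0 < lam * t k := mul_pos hlampos (htpos k)
    have hsle : s ≤ ((lam * t k)⁻¹)^2 := by
      rcases eq_or_lt_of_le hsnn with hs0 | hs0
      · rw [← hs0]; positivity
      · have hstep : (lam * t k * s)^2 ≤ s := by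
          nlinarith [mul_nonneg hltk.le hsnn]
        have key2 : (lam * t k)^2 * s ≤ 1 := by
          nlinarith [mul_pos (mul_pos hltk hltk) hs0]
        have hA : 0 < (lam * t k)^2 := pow_pos hltk 2
        rw [inv_pow]
        nlinarith [inv_pos.2 hA, inv_mul_cancel₀ hA.ne', mul_le_mul_of_nonneg_left key2 (inv_pos.2 hA).le]
    have : |w i| ≤ (lam * t k)⁻¹ := by
      have habs : |w i|^2 ≤ ((lam * t k)⁻¹)^2 := by rw [sq_abs]; exact le_trans h3 hsle
      nlinarith [abs_nonneg (w i), inv_nonneg.2 hltk.le]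
    rw [← hwi i]
    exact this
  -- identify B⁻¹ with -(N⁻¹)
  have hBinv : ∀ k, (Matrix.of fun i' j' : Fin h =>
      ∑ e : E, ((a e i' : ℝ) * (a e j' : ℝ)) * Real.log (y k e))⁻¹ = -((N k)⁻¹) := by
    intro k
    have hBN : (Matrix.of fun i' j' : Fin h =>
        ∑ e : E, ((a e i' : ℝ) * (a e j' : ℝ)) * Real.log (y k e)) = -(N k) := by
      ext i' j'
      simp only [hN, Matrix.neg_apply, Matrix.of_apply, hc, ← Finset.sum_neg_distrib]
      exact Finset.sum_congr rfl fun e _ => by ring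
    rw [hBN]
    refine Matrix.inv_eq_right_inv ?_
    rw [Matrix.neg_mul, Matrix.mul_neg, neg_neg, hinv k]
  -- conclude by squeezing
  have hlimz : Tendsto (fun k => (lam * t k)⁻¹) atTop (nhds 0) :=
    (httop.const_mul_atTop hlampos).inv_tendsto_atTop
  refine squeeze_zero_norm (fun k => ?_) hlimz
  rw [hBinv k]
  simp only [Matrix.neg_apply, Real.norm_eq_abs, abs_neg]
  exact hbound k
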